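/- Let φ : ℝ → [0,1] be a Lipschitz continuous function with φ(x) = 0 for x ≤ −2 and φ(x) = 1 for x ≥ −1. For γ ∈ (0,1] define u_γ(x) = φ(x) for x ≤ −1, u_γ(x) = 1 for −1 < x ≤ −γ, u_γ(x) = (1/2)(1 − x/γ) for −γ < x < γ, u_γ(x) = 0 for x ≥ γ; and define u₀(x) = φ(x) for x ≤ −1, u₀(x) = 1 for −1 < x ≤ 0, u₀(x) = 0 for x > 0. Let B u = [u(1−u)]_x denote the distributional derivative of the flux u(1−u) composed with u, so that (Bu_γ)(x) = [φ(x)(1−φ(x))]_x for x ≤ −1, 0 for −1 < x ≤ −γ, −x/(2γ²) for −γ < x < γ, 0 for x ≥ γ, and (Bu₀)(x) = [φ(x)(1−φ(x))]_x for x ≤ −1 and 0 for x > −1. Then for every γ ∈ (0,1] and λ ∈ (0,1]: ‖u_γ − u₀‖_{L¹(ℝ)} = γ/2 and ‖(u_γ + λ B u_γ) − (u₀ + λ B u₀)‖_{L¹(ℝ)} = (γ/2)·(1 + λ²/γ²)/(1 + λ/γ). In particular, taking λ ∈ (0,1/2] and γ = 2λ gives ‖(u_{2λ} + λ B u_{2λ})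 − (u₀ + λ B u₀)‖_{L¹} = (5/6)‖u_{2λ} − u₀‖_{L¹} < ‖u_{2λ} − u₀‖_{L¹}; hence the operator B u = [u(1−u)]_x on L¹(ℝ) is not accretive. -/

import Mathlib

open MeasureTheory Set

/-- The family `u_γ` of Example 7.2 (for `γ > 0`). -/
noncomputable def uGamma (φ : ℝ → ℝ) (γ : ℝ) (x : ℝ) : ℝ :=
  if x ≤ -1 then φ x
  else if x ≤ -γ then 1
  else if x < γ then (1 - x / γ) / 2
  else 0

/-- The function `u₀` of Example 7.2 (the case `γ = 0`). -/
noncomputable def uZero (φ : ℝ → ℝ) (x : ℝ) : ℝ :=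
  if x ≤ -1 then φ x
  else if x ≤ 0 then 1
  else 0

/-- `B u_γ = [u_γ(1−u_γ)]_x` computed explicitly. -/
noncomputable def BuGamma (φ : ℝ → ℝ) (γ : ℝ) (x : ℝ) : ℝ :=
  if x ≤ -1 then deriv (fun y => φ y * (1 - φ y)) x
  else if x ≤ -γ then 0
  else if x < γ then -x / (2 * γ^2)
  else 0

/-- `B u₀ = [u₀(1−u₀)]_x` computed explicitly. -/
noncomputable def BuZero (φ : ℝ → ℝ) (x : ℝ) : ℝ :=
  if x ≤ -1 then deriv (fun y => φ y * (1 - φ y)) x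
  else 0

lemma int_affine (a b p q : ℝ) :
    ∫ x in a..b, (p + q * x) = p * (b - a) + q * ((b^2 - a^2)/2) := by
  have h1 : IntervalIntegrable (fun _ : ℝ => p) volume a b := intervalIntegrable_const
  have h2 : IntervalIntegrable (fun x : ℝ => q * x) volume a b :=
    (continuous_const.mul continuous_id).intervalIntegrable a b
  rw [intervalIntegral.integral_add h1 h2, intervalIntegral.integral_const,
    intervalIntegral.integral_const_mul]
  rw [integral_id]
  simp [smul_eq_mul, mul_comm]

/-- Key: value of `∫ a..b, |(s + c*x)/2|` split at the root. -/
lemma int_abs_affine (c s a b : ℝ) (hc : 0 < c) (ha : a ≤ -s/c) (hb : -s/c ≤ b) :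
    ∫ x in a..b, |(s + c * x)/2|
      = ((s + c*a)^2 + (s + c*b)^2) / (4*c) := by
  set m := -s/c with hm
  have hcm : s + c * m = 0 := by rw [hm]; field_simp; ring
  have hsplit : ∫ x in a..b, |(s + c * x)/2|
      = (∫ x in a..m, |(s + c * x)/2|) + ∫ x in m..b, |(s + c * x)/2| := by
    have hcont : Continuous fun x : ℝ => |(s + c * x)/2| :=
      ((continuous_const.add (continuous_const.mul continuous_id)).div_const 2).abs
    exact (intervalIntegral.integral_add_adjacent_intervals
      (hcont.intervalIntegrable a m) (hcont.intervalIntegrable m b)).symm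
  have h1 : ∫ x in a..m, |(s + c * x)/2| = ∫ x in a..m, (-(s/2) + (-(c/2)) * x) := by
    apply intervalIntegral.integral_congr
    intro x hx
    rw [uIcc_of_le ha] at hx
    have hxm : c * x ≤ c * m := mul_le_mul_of_nonneg_left hx.2 hc.le
    have hle : (s + c * x) / 2 ≤ 0 := by nlinarith
    show |(s + c * x)/2| = -(s/2) + (-(c/2)) * x
    rw [abs_of_nonpos hle]; ring
  have h2 : ∫ x in m..b, |(s + c * x)/2| = ∫ x in m..b, (s/2 + (c/2) * x) := by
    apply intervalIntegral.integral_congr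
    intro x hx
    rw [uIcc_of_le hb] at hx
    have hxm : c * m ≤ c * x := mul_le_mul_of_nonneg_left hx.1 hc.le
    have hle : 0 ≤ (s + c * x) / 2 := by nlinarith
    show |(s + c * x)/2| = s/2 + (c/2) * x
    rw [abs_of_nonneg hle]; ring
  rw [hsplit, h1, h2, int_affine, int_affine]
  have hc' : c ≠ 0 := ne_of_gt hc
  field_simp [hm]
  linear_combination (-8 * (s + c * m)) * hcm

/-- negative-slope version -/
lemma int_abs_affine_neg (c s a b : ℝ) (hc : 0 < c) (ha : a ≤ s/c) (hb : s/c ≤ b) :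
    ∫ x in a..b, |(s + c * (-x))/2|
      = ((s + c*(-a))^2 + (s + c*(-b))^2) / (4*c) := by
  set m := s/c with hm
  have hcm : s - c * m = 0 := by rw [hm]; field_simp; ring
  have hsplit : ∫ x in a..b, |(s + c * (-x))/2|
      = (∫ x in a..m, |(s + c * (-x))/2|) + ∫ x in m..b, |(s + c * (-x))/2| := by
    have hcont : Continuous fun x : ℝ => |(s + c * (-x))/2| :=
      ((continuous_const.add (continuous_const.mul continuous_neg)).div_const 2).abs
    exact (intervalIntegral.integral_add_adjacent_intervals
      (hcont.intervalIntegrable a m) (hcont.intervalIntegrable m b)).symm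
  have h1 : ∫ x in a..m, |(s + c * (-x))/2| = ∫ x in a..m, (s/2 + (-(c/2)) * x) := by
    apply intervalIntegral.integral_congr
    intro x hx
    rw [uIcc_of_le ha] at hx
    have hxm : c * x ≤ c * m := mul_le_mul_of_nonneg_left hx.2 hc.le
    have hle : 0 ≤ (s + c * (-x)) / 2 := by nlinarith
    show |(s + c * (-x))/2| = s/2 + (-(c/2)) * x
    rw [abs_of_nonneg hle]; ring
  have h2 : ∫ x in m..b, |(s + c * (-x))/2| = ∫ x in m..b, (-(s/2) + (c/2) * x) := by
    apply intervalIntegral.integral_congr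
    intro x hx
    rw [uIcc_of_le hb] at hx
    have hxm : c * m ≤ c * x := mul_le_mul_of_nonneg_left hx.1 hc.le
    have hle : (s + c * (-x)) / 2 ≤ 0 := by nlinarith
    show |(s + c * (-x))/2| = -(s/2) + (c/2) * x
    rw [abs_of_nonpos hle]; ring
  rw [hsplit, h1, h2, int_affine, int_affine]
  have hc' : c ≠ 0 := ne_of_gt hc
  field_simp [hm]
  linear_combination (-8 * (s - c * m)) * hcm

lemma calcH (φ : ℝ → ℝ) (γ lam : ℝ) (hγ0 : 0 < γ) (hγ1 : γ ≤ 1) (hlam : 0 ≤ lam) :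
    (∫ x, |(uGamma φ γ x + lam * BuGamma φ γ x) - (uZero φ x + lam * BuZero φ x)|)
      = (γ^2 + lam^2) / (2*(γ+lam)) := by
  have hγ0' : γ ≠ 0 := ne_of_gt hγ0
  have hγl : 0 < γ + lam := by linarith
  have hγl' : γ + lam ≠ 0 := ne_of_gt hγl
  set c : ℝ := (γ + lam)/γ^2 with hcdef
  have hc : 0 < c := div_pos hγl (by positivity)
  set H : ℝ → ℝ := fun x =>
    |(uGamma φ γ x + lam * BuGamma φ γ x) - (uZero φ x + lam * BuZero φ x)| with hHdef
  -- vanishing outside Ioo (-γ) γ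
  have hsupp : ∀ x, x ∉ Ioo (-γ) γ → H x = 0 := by
    intro x hx
    simp only [mem_Ioo, not_and_or, not_lt] at hx
    rcases hx with hx | hx
    · by_cases h1 : x ≤ -1
      · simp [hHdef, uGamma, uZero, BuGamma, BuZero, h1]
      · have hxg : x ≤ -γ := hx
        have hx0 : x ≤ 0 := by linarith
        simp [hHdef, uGamma, uZero, BuGamma, BuZero, h1, hxg, hx0]
    · have h1 : ¬ x ≤ -1 := by push_neg; linarith
      have h2 : ¬ x ≤ -γ := by push_neg; linarith
      have h3 : ¬ x < γ := by push_neg; linarith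
      have h4 : ¬ x ≤ 0 := by push_neg; linarith
      simp [hHdef, uGamma, uZero, BuGamma, BuZero, h1, h2, h3, h4]
  -- pointwise formulas
  have hleft : ∀ x ∈ Ioc (-γ) 0, H x = |(1 + c * x)/2| := by
    intro x hx
    have h1 : ¬ x ≤ -1 := by push_neg; linarith [hx.1]
    have h2 : ¬ x ≤ -γ := by push_neg; exact hx.1
    have h3 : x < γ := by linarith [hx.2]
    have h4 : x ≤ 0 := hx.2
    simp only [hHdef, uGamma, uZero, BuGamma, BuZero, h1, h2, h3, h4, if_true, if_false,
      if_neg h1, if_neg h2, if_pos h3, if_pos h4]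
    rw [show (1 - x / γ) / 2 + lam * (-x / (2 * γ ^ 2)) - (1 + lam * 0)
        = -((1 + c * x)/2) by rw [hcdef]; field_simp; ring, abs_neg]
  have hright : ∀ x ∈ Ioo (0:ℝ) γ, H x = |(1 + c * (-x))/2| := by
    intro x hx
    have h1 : ¬ x ≤ -1 := by push_neg; linarith [hx.1]
    have h2 : ¬ x ≤ -γ := by push_neg; linarith [hx.1]
    have h3 : x < γ := hx.2
    have h4 : ¬ x ≤ 0 := by push_neg; exact hx.1
    simp only [hHdef, uGamma, uZero, BuGamma, BuZero, if_neg h1, if_neg h2, if_pos h3,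
      if_neg h4]
    rw [show (1 - x / γ) / 2 + lam * (-x / (2 * γ ^ 2)) - (0 + lam * 0)
        = (1 + c * (-x))/2 by rw [hcdef]; field_simp; ring]
  -- reduce to set integral
  have hind : ∫ x, H x = ∫ x in Ioo (-γ) γ, H x := by
    rw [← integral_indicator measurableSet_Ioo]
    congr 1; funext x
    by_cases hx : x ∈ Ioo (-γ) γ
    · rw [indicator_of_mem hx]
    · rw [indicator_of_notMem hx, hsupp x hx]
  have hunion : Ioc (-γ) 0 ∪ Ioo (0:ℝ) γ = Ioo (-γ) γ :=
    Ioc_union_Ioo_eq_Ioo (by linarith) hγ0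
  have hG1 : Continuous fun x : ℝ => |(1 + c * x)/2| :=
    ((continuous_const.add (continuous_const.mul continuous_id)).div_const 2).abs
  have hG2 : Continuous fun x : ℝ => |(1 + c * (-x))/2| :=
    ((continuous_const.add (continuous_const.mul continuous_neg)).div_const 2).abs
  have hi1 : IntegrableOn H (Ioc (-γ) 0) :=
    ((hG1.integrableOn_Icc (a := -γ) (b := 0)).mono_set Ioc_subset_Icc_self).congr_fun
      (fun x hx => (hleft x hx).symm) measurableSet_Ioc
  have hi2 : IntegrableOn H (Ioo (0:ℝ) γ) :=
    ((hG2.integrableOn_Icc (a := 0) (b := γ)).mono_set Ioo_subset_Icc_self).congr_fun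
      (fun x hx => (hright x hx).symm) measurableSet_Ioo
  have hdisj : Disjoint (Ioc (-γ) 0) (Ioo (0:ℝ) γ) := by
    apply Set.disjoint_left.2
    intro x hx hx'
    exact absurd hx'.1 (not_lt.2 hx.2)
  have hsplitset : ∫ x in Ioo (-γ) γ, H x
      = (∫ x in Ioc (-γ) 0, H x) + ∫ x in Ioo (0:ℝ) γ, H x := by
    rw [← hunion, setIntegral_union hdisj measurableSet_Ioo hi1 hi2]
  -- evaluate each piece
  have hmval : -(1:ℝ)/c = -(γ^2/(γ+lam)) := by rw [hcdef]; field_simp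
  have hmfrac : γ^2/(γ+lam) ≤ γ := by
    rw [div_le_iff₀ hγl]; nlinarith
  have hmfrac0 : 0 ≤ γ^2/(γ+lam) := by positivity
  have hL : ∫ x in Ioc (-γ) 0, H x
      = ((1 + c*(-γ))^2 + (1 + c*0)^2) / (4*c) := by
    rw [setIntegral_congr_fun measurableSet_Ioc hleft,
      ← intervalIntegral.integral_of_le (by linarith : -γ ≤ (0:ℝ))]
    exact int_abs_affine c 1 (-γ) 0 hc (by rw [hmval]; linarith) (by rw [hmval]; linarith)
  have hR : ∫ x in Ioo (0:ℝ) γ, H x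
      = ((1 + c*(-0))^2 + (1 + c*(-γ))^2) / (4*c) := by
    rw [setIntegral_congr_fun measurableSet_Ioo hright, ← integral_Ioc_eq_integral_Ioo,
      ← intervalIntegral.integral_of_le hγ0.le]
    exact int_abs_affine_neg c 1 0 γ hc
      (by rw [one_div, hcdef]; rw [inv_div]; positivity)
      (by rw [show (1:ℝ)/c = γ^2/(γ+lam) by rw [hcdef]; field_simp]; linarith)
  rw [hind, hsplitset, hL, hR]
  have hcg : c * γ = (γ + lam)/γ := by rw [hcdef]; field_simp
  rw [hcdef]
  field_simp
  ring

lemma calcFirst (φ : ℝ → ℝ) (γ : ℝ) (hγ0 : 0 < γ) (hγ1 : γ ≤ 1) :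
    (∫ x, |uGamma φ γ x - uZero φ x|) = γ / 2 := by
  have h := calcH φ γ 0 hγ0 hγ1 le_rfl
  simp only [zero_mul, add_zero] at h
  rw [h]
  have : γ ≠ 0 := ne_of_gt hγ0
  field_simp
  ring

/-- Example 7.2: the operator `B u = [u(1−u)]_x` is not accretive on `L¹(ℝ)`:
explicit computation of `‖u_γ − u₀‖_{L¹}` and
`‖(u_γ + λ B u_γ) − (u₀ + λ B u₀)‖_{L¹}`, and the resulting strict decrease for
`γ = 2λ`. -/
theorem operator_B_not_accretive
    (φ : ℝ → ℝ) (hφLip : ∃ K : NNReal, LipschitzWith K φ)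
    (hφ01 : ∀ x, φ x ∈ Icc (0:ℝ) 1)
    (hφ0 : ∀ x ≤ (-2 : ℝ), φ x = 0) (hφ1 : ∀ x : ℝ, -1 ≤ x → φ x = 1) :
    (∀ γ ∈ Ioc (0:ℝ) 1, ∀ lam ∈ Ioc (0:ℝ) 1,
      (∫ x, |uGamma φ γ x - uZero φ x|) = γ / 2 ∧
      (∫ x, |(uGamma φ γ x + lam * BuGamma φ γ x) - (uZero φ x + lam * BuZero φ x)|)
        = γ / 2 * (1 + lam^2 / γ^2) / (1 + lam / γ)) ∧
    (∀ lam ∈ Ioc (0:ℝ) (1/2),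
      (∫ x, |(uGamma φ (2*lam) x + lam * BuGamma φ (2*lam) x)
              - (uZero φ x + lam * BuZero φ x)|)
        = 5 / 6 * ∫ x, |uGamma φ (2*lam) x - uZero φ x|) ∧
    (∀ lam ∈ Ioc (0:ℝ) (1/2),
      (∫ x, |(uGamma φ (2*lam) x + lam * BuGamma φ (2*lam) x)
              - (uZero φ x + lam * BuZero φ x)|)
        < ∫ x, |uGamma φ (2*lam) x - uZero φ x|) := by
  have key2 : ∀ lam ∈ Ioc (0:ℝ) (1/2),
      (∫ x, |(uGamma φ (2*lam) x + lam * BuGamma φ (2*lam) x)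
              - (uZero φ x + lam * BuZero φ x)|)
        = 5 / 6 * ∫ x, |uGamma φ (2*lam) x - uZero φ x| := by
    intro lam hlam
    obtain ⟨hl0, hl1⟩ := hlam
    have h1 := calcH φ (2*lam) lam (by linarith) (by linarith) hl0.le
    have h2 := calcFirst φ (2*lam) (by linarith) (by linarith)
    rw [h1, h2]
    have : lam ≠ 0 := ne_of_gt hl0
    field_simp
    ring
  refine ⟨?_, key2, ?_⟩
  · intro γ hγ lam hlam
    obtain ⟨hγ0, hγ1⟩ := hγ
    obtain ⟨hl0, hl1⟩ := hlam
    refine ⟨calcFirst φ γ hγ0 hγ1, ?_⟩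
    rw [calcH φ γ lam hγ0 hγ1 hl0.le]
    have hγ' : γ ≠ 0 := ne_of_gt hγ0
    have hγl : γ + lam ≠ 0 := by positivity
    have hd : 1 + lam / γ ≠ 0 := by
      rw [show 1 + lam/γ = (γ+lam)/γ by field_simp]
      positivity
    field_simp
  · intro lam hlam
    rw [key2 lam hlam]
    have h2 := calcFirst φ (2*lam) (by linarith [hlam.1]) (by linarith [hlam.2])
    rw [h2]
    have : 0 < lam := hlam.1
    linarith
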